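/- arXiv:1603.00647 — 5 statements merged into one kernel-verified Lean document; each statement's English description precedes it below -/
import Mathlib

section
/- Let G, X, p, V, t be as given, and let E = V ⋊ G be the semidirect product (the permutation wreath product Z_p ≀ G). If s = (v, g) ∈ E with g of order p having a fixed point on X, then the V-component of s^p is v·(1 + g + ... + g^(p-1)), and this cannot equal c·t for nonzero c ∈ F_p; hence s^p ≠ (c·t, 1) for any nonzero c ∈ F_p. -/
variable {G X : Type*} [Group G] [MulAction G X] (p : ℕ)

/-- The action of `G` on the permutation module `X → ZMod p` (written multiplicatively
so that it can serve as the kernel of a semidirect product). -/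
def permAut : G →* MulAut (Multiplicative (X → ZMod p)) where
  toFun g :=
    { toFun := fun v => Multiplicative.ofAdd (fun x => Multiplicative.toAdd v (g⁻¹ • x))
      invFun := fun v => Multiplicative.ofAdd (fun x => Multiplicative.toAdd v (g • x))
      left_inv := fun v => by
        apply Multiplicative.toAdd.injective
        funext x
        simp
      right_inv := fun v => by
        apply Multiplicative.toAdd.injective
        funext x
        simp
      map_mul' := fun v w => rfl }
  map_one' := by
    apply MulEquiv.ext
    intro v
    apply Multiplicative.toAdd.injective
    funext x
    simp
  map_mul' := fun g h => by
    apply MulEquiv.ext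
    intro v
    apply Multiplicative.toAdd.injective
    funext x
    simp [mul_smul]

/-- The permutation wreath product `ℤ_p ≀ G` for the action of `G` on `X`. -/
abbrev WreathProd (G X : Type*) [Group G] [MulAction G X] (p : ℕ) :=
  SemidirectProduct (Multiplicative (X → ZMod p)) G (permAut p)

lemma pow_left_aux {G X : Type*} [Group G] [MulAction G X]
    (p : ℕ) (v : Multiplicative (X → ZMod p)) (g : G) (n : ℕ) :
    ((⟨v, g⟩ : WreathProd G X p) ^ n).left =
        Multiplicative.ofAdd
          (fun y : X => ∑ i ∈ Finset.range n, Multiplicative.toAdd v ((g ^ i)⁻¹ • y)) := by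
  induction n with
  | zero =>
    apply Multiplicative.toAdd.injective
    funext y
    simp
  | succ n ih =>
    rw [pow_succ]
    apply Multiplicative.toAdd.injective
    funext y
    have : ((⟨v, g⟩ : WreathProd G X p) ^ n * ⟨v, g⟩).left
        = ((⟨v, g⟩ : WreathProd G X p) ^ n).left *
          permAut p (((⟨v, g⟩ : WreathProd G X p) ^ n).right) v := rfl
    rw [this, ih]
    have hr : ((⟨v, g⟩ : WreathProd G X p) ^ n).right = g ^ n := by
      have := map_pow (SemidirectProduct.rightHom (φ := permAut p)) (⟨v, g⟩ : WreathProd G X p) n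
      simpa using this
    rw [hr]
    show (∑ i ∈ Finset.range n, Multiplicative.toAdd v ((g ^ i)⁻¹ • y))
        + Multiplicative.toAdd v ((g ^ n)⁻¹ • y) = _
    rw [toAdd_ofAdd, Finset.sum_range_succ]

/-- In the wreath product `E = V ⋊ G`, if `s = (v, g)` where `g` has
order `p` (a prime) and fixes a point of `X`, then the `V`-component of `s^p` is
`v·(1 + g + ⋯ + g^(p-1))`, and `s^p ≠ (c·t, 1)` for every nonzero `c ∈ 𝔽_p`,
where `t` is the all-ones vector. -/
theorem stmt_2 {G X : Type*} [Group G] [Finite G] [Fintype X] [MulAction G X]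
    (p : ℕ) [Fact p.Prime] (v : Multiplicative (X → ZMod p)) (g : G)
    (hg : orderOf g = p) (x : X) (hx : g • x = x) :
    ((⟨v, g⟩ : WreathProd G X p) ^ p).left =
        Multiplicative.ofAdd
          (fun y : X => ∑ i ∈ Finset.range p, Multiplicative.toAdd v ((g ^ i)⁻¹ • y)) ∧
      ∀ c : ZMod p, c ≠ 0 →
        (⟨v, g⟩ : WreathProd G X p) ^ p ≠
          ⟨Multiplicative.ofAdd (fun _ : X => c), 1⟩ := by
  have hleft := pow_left_aux p v g p
  refine ⟨hleft, fun c hc hEq => ?_⟩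
  have := congrArg SemidirectProduct.left hEq
  rw [hleft] at this
  have h2 := congrFun (congrArg Multiplicative.toAdd this) x
  simp only [toAdd_ofAdd] at h2
  have hfix : ∀ i : ℕ, (g ^ i)⁻¹ • x = x := by
    intro i
    induction i with
    | zero => simp
    | succ m ihm =>
      rw [pow_succ, mul_inv_rev, mul_smul, ihm, inv_smul_eq_iff, hx]
  simp only [hfix] at h2
  rw [Finset.sum_const, Finset.card_range, nsmul_eq_mul] at h2
  rw [ZMod.natCast_self, zero_mul] at h2
  exact hc h2.symm
end

section
/- Let 0 → L → M be an injective morphism of G-modules, and let E be an extension 1 → M → E → G → 1 defined by a class γ ∈ H²(G, M). Then E contains a subgroup S with S ∩ M = L and S·M = E if and only if γ lies in the image of the induced map φ: H²(G, L) → H²(G, M). -/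
open scoped Pointwise

/-- A `2`-cocycle of the group `G` with values in the `G`-module `M`. -/
def IsTwoCocycle {G M : Type*} [Group G] [AddCommGroup M] [DistribMulAction G M]
    (γ : G → G → M) : Prop :=
  ∀ g h k : G, g • γ h k + γ g (h * k) = γ (g * h) k + γ g h

/-- Two `2`-cocycles are cohomologous if they differ by a coboundary. -/
def Cohomologous {G M : Type*} [Group G] [AddCommGroup M] [DistribMulAction G M]
    (γ₁ γ₂ : G → G → M) : Prop :=
  ∃ c : G → M, ∀ g h : G, γ₁ g h - γ₂ g h = g • c h - c (g * h) + c g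

/-- Lemma 2 of [zse]. Let `f : L → M` be an injective morphism of
`G`-modules, and let `E` be an extension `1 → M → E → G → 1` whose class in `H²(G,M)`
is represented by the `2`-cocycle `γ` (via the section `σ`). Then `E` contains a
subgroup `S` with `S ∩ M = L` and `S · M = E` if and only if the class `γ` lies in the
image of the induced map `φ : H²(G,L) → H²(G,M)`, i.e. iff there is a `2`-cocycle `β`
with values in `L` such that `f ∘ β` is cohomologous to `γ`. -/
theorem stmt_4 {G L M E : Type*} [Group G] [AddCommGroup L] [AddCommGroup M]
    [DistribMulAction G L] [DistribMulAction G M] [Group E]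
    (f : L →+ M) (hf : Function.Injective f) (hfG : ∀ (g : G) (l : L), f (g • l) = g • f l)
    (ι : Multiplicative M →* E) (hι : Function.Injective ι)
    (π : E →* G) (hπ : Function.Surjective π)
    (hexact : ι.range = π.ker)
    (hconj : ∀ (e : E) (m : Multiplicative M),
      e * ι m * e⁻¹ = ι (Multiplicative.ofAdd (π e • Multiplicative.toAdd m)))
    (γ : G → G → M) (σ : G → E) (hσ : ∀ g, π (σ g) = g)
    (hγ : ∀ g h : G, σ g * σ h * (σ (g * h))⁻¹ = ι (Multiplicative.ofAdd (γ g h))) :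
    (∃ S : Subgroup E,
        S ⊓ ι.range = (ι.comp (AddMonoidHom.toMultiplicative f)).range ∧
        (S : Set E) * (ι.range : Set E) = Set.univ) ↔
      ∃ β : G → G → L, IsTwoCocycle β ∧ Cohomologous (fun g h => f (β g h)) γ := by
  classical
  set j : M → E := fun m => ι (Multiplicative.ofAdd m) with hjdef
  have hj_mul : ∀ a b : M, j (a + b) = j a * j b := fun a b =>
    ι.map_mul (Multiplicative.ofAdd a) (Multiplicative.ofAdd b)
  have hj0 : j (0 : M) = 1 := ι.map_one
  have hjinv : ∀ m : M, (j m)⁻¹ = j (-m) := fun m =>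
    inv_eq_of_mul_eq_one_right (by rw [← hj_mul, add_neg_cancel, hj0])
  have hj_inj : Function.Injective j := fun a b h => by
    have := hι h
    exact Multiplicative.ofAdd.injective this
  have hπj : ∀ m : M, π (j m) = 1 := fun m => by
    have : j m ∈ π.ker := hexact ▸ ⟨Multiplicative.ofAdd m, rfl⟩
    exact this
  have hker : ∀ e : E, π e = 1 → ∃ m : M, j m = e := fun e he => by
    have : e ∈ ι.range := by rw [hexact]; exact he
    obtain ⟨x, hx⟩ := this
    exact ⟨Multiplicative.toAdd x, hx⟩
  have hswap : ∀ (e : E) (m : M), e * j m = j (π e • m) * e := fun e m => by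
    have h1 : e * j m * e⁻¹ = j (π e • m) := by simpa using hconj e (Multiplicative.ofAdd m)
    calc e * j m = (e * j m * e⁻¹) * e := by group
      _ = j (π e • m) * e := by rw [h1]
  have hσmul : ∀ g h : G, σ g * σ h = j (γ g h) * σ (g * h) := fun g h => by
    calc σ g * σ h = (σ g * σ h * (σ (g * h))⁻¹) * σ (g * h) := by group
      _ = j (γ g h) * σ (g * h) := by rw [hγ g h]
  have hcancel : ∀ (a b : M) (x : E), j a * x = j b * x → a = b := fun a b x h =>
    hj_inj (mul_right_cancel h)
  have hLrange : ∀ e : E,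
      e ∈ (ι.comp (AddMonoidHom.toMultiplicative f)).range ↔ ∃ l : L, j (f l) = e := fun e => by
    constructor
    · rintro ⟨x, rfl⟩; exact ⟨Multiplicative.toAdd x, rfl⟩
    · rintro ⟨l, rfl⟩; exact ⟨Multiplicative.ofAdd l, rfl⟩
  constructor
  · rintro ⟨S, hS1, hS2⟩
    have hτ : ∀ g : G, ∃ e : E, e ∈ S ∧ π e = g := fun g => by
      have hmem : σ g ∈ (S : Set E) * (ι.range : Set E) := by rw [hS2]; trivial
      obtain ⟨s, hs, m, hm, hsm⟩ := hmem
      refine ⟨s, hs, ?_⟩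
      have hm1 : π m = 1 := by rw [SetLike.mem_coe, hexact] at hm; exact hm
      have h2 : π (σ g) = π s * π m := by rw [← hsm]; simp
      rw [hσ, hm1, mul_one] at h2
      exact h2.symm
    choose τ hτS hτπ using hτ
    have hβex : ∀ g h : G, ∃ l : L, τ g * τ h = j (f l) * τ (g * h) := fun g h => by
      have hmem : τ g * τ h * (τ (g * h))⁻¹ ∈ S ⊓ ι.range := by
        refine Subgroup.mem_inf.mpr ⟨mul_mem (mul_mem (hτS g) (hτS h)) (inv_mem (hτS (g * h))), ?_⟩
        rw [hexact]
        show π _ = 1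
        simp only [map_mul, map_inv, hτπ]
        group
      rw [hS1, hLrange] at hmem
      obtain ⟨l, hl⟩ := hmem
      exact ⟨l, by rw [hl]; group⟩
    choose β hβ using hβex
    have hcoc : IsTwoCocycle β := by
      intro g h k
      have e1 : (τ g * τ h) * τ k = j (f (β g h) + f (β (g * h) k)) * τ (g * h * k) := by
        rw [hβ g h, mul_assoc (j (f (β g h))), hβ (g * h) k, ← mul_assoc, ← hj_mul]
      have e2 : τ g * (τ h * τ k) = j (g • f (β h k) + f (β g (h * k))) * τ (g * (h * k)) := by
        rw [hβ h k, ← mul_assoc (τ g), hswap (τ g), hτπ, mul_assoc, hβ g (h * k),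
          ← mul_assoc, ← hj_mul]
      rw [mul_assoc] at e1
      rw [mul_assoc g h k] at e1
      have := hcancel _ _ _ (e2.symm.trans e1)
      apply hf
      rw [map_add, map_add, hfG, this, add_comm]
    have hcex : ∀ g : G, ∃ m : M, τ g = j m * σ g := fun g => by
      obtain ⟨m, hm⟩ := hker (τ g * (σ g)⁻¹) (by simp [hτπ, hσ])
      exact ⟨m, by rw [hm]; group⟩
    choose c hcq using hcex
    refine ⟨β, hcoc, c, fun g h => ?_⟩
    have e1 : τ g * τ h = j (f (β g h) + c (g * h)) * σ (g * h) := by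
      rw [hβ g h, hcq (g * h), ← mul_assoc, ← hj_mul]
    have e2 : τ g * τ h = j (c g + (g • c h + γ g h)) * σ (g * h) := by
      calc τ g * τ h = j (c g) * (σ g * j (c h)) * σ h := by rw [hcq g, hcq h]; group
        _ = j (c g) * (j (g • c h) * σ g) * σ h := by rw [hswap (σ g), hσ]
        _ = j (c g) * (j (g • c h) * (j (γ g h) * σ (g * h))) := by
            simp only [mul_assoc]; rw [hσmul]
        _ = j (c g + (g • c h + γ g h)) * σ (g * h) := by rw [hj_mul, hj_mul]; group
    have key := hcancel _ _ _ (e1.symm.trans e2)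
    have hfb : f (β g h) = c g + (g • c h + γ g h) - c (g * h) := eq_sub_of_add_eq key
    show f (β g h) - γ g h = g • c h - c (g * h) + c g
    rw [hfb]; abel
  · rintro ⟨β, hβ, c, hc⟩
    set τ : G → E := fun g => j (c g) * σ g with hτdef
    have hτπ : ∀ g : G, π (τ g) = g := fun g => by
      simp only [hτdef, map_mul, hπj, hσ, one_mul]
    have key : ∀ g h : G, τ g * τ h = j (f (β g h)) * τ (g * h) := by
      intro g h
      have hfb : f (β g h) = g • c h - c (g * h) + c g + γ g h :=
        sub_eq_iff_eq_add.mp (hc g h)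
      have hsum : c g + (g • c h + γ g h) = f (β g h) + c (g * h) := by rw [hfb]; abel
      calc τ g * τ h = j (c g) * (σ g * j (c h)) * σ h := by rw [hτdef]; group
        _ = j (c g) * (j (g • c h) * σ g) * σ h := by rw [hswap (σ g), hσ]
        _ = j (c g) * (j (g • c h) * (j (γ g h) * σ (g * h))) := by
            simp only [mul_assoc]; rw [hσmul]
        _ = j (c g + (g • c h + γ g h)) * σ (g * h) := by rw [hj_mul, hj_mul]; group
        _ = j (f (β g h)) * τ (g * h) := by rw [hsum, hj_mul, hτdef]; group
    have hτ1 : τ 1 = j (f (β 1 1)) := by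
      have h1 := key 1 1
      rw [one_mul] at h1
      exact mul_right_cancel h1
    refine ⟨{
      carrier := {e | ∃ l : L, ∃ g : G, e = j (f l) * τ g}
      one_mem' := ⟨-(β 1 1), 1, by
        rw [hτ1, ← hj_mul, ← map_add, neg_add_cancel, map_zero, hj0]⟩
      mul_mem' := by
        rintro x y ⟨l, g, rfl⟩ ⟨l', g', rfl⟩
        refine ⟨l + g • l' + β g g', g * g', ?_⟩
        have hfs : f (l + g • l' + β g g') = f l + g • f l' + f (β g g') := by
          rw [map_add, map_add, hfG]
        calc (j (f l) * τ g) * (j (f l') * τ g')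
            = j (f l) * (τ g * j (f l')) * τ g' := by group
          _ = j (f l) * (j (g • f l') * τ g) * τ g' := by rw [hswap (τ g), hτπ]
          _ = j (f l) * j (g • f l') * (τ g * τ g') := by group
          _ = j (f l) * j (g • f l') * (j (f (β g g')) * τ (g * g')) := by rw [key]
          _ = j (f (l + g • l' + β g g')) * τ (g * g') := by
              rw [hfs, hj_mul, hj_mul]; group
      inv_mem' := by
        rintro x ⟨l, g, rfl⟩
        refine ⟨-(β g⁻¹ g + β 1 1) + g⁻¹ • (-l), g⁻¹, ?_⟩
        have ha : τ g⁻¹ * τ g = j (f (β g⁻¹ g + β 1 1)) := by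
          have h1 := key g⁻¹ g
          rw [inv_mul_cancel] at h1
          rw [h1, hτ1, ← hj_mul, ← map_add]
        have hτginv : (τ g)⁻¹ = j (f (-(β g⁻¹ g + β 1 1))) * τ g⁻¹ := by
          rw [map_neg, ← hjinv, ← ha]; group
        have hfs : f (-(β g⁻¹ g + β 1 1) + g⁻¹ • (-l)) =
            f (-(β g⁻¹ g + β 1 1)) + g⁻¹ • f (-l) := by
          rw [map_add, hfG]
        calc (j (f l) * τ g)⁻¹ = (τ g)⁻¹ * (j (f l))⁻¹ := by group
          _ = j (f (-(β g⁻¹ g + β 1 1))) * (τ g⁻¹ * j (f (-l))) := by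
              rw [hτginv, hjinv, ← map_neg]; group
          _ = j (f (-(β g⁻¹ g + β 1 1))) * (j (g⁻¹ • f (-l)) * τ g⁻¹) := by
              rw [hswap (τ g⁻¹), hτπ]
          _ = j (f (-(β g⁻¹ g + β 1 1) + g⁻¹ • (-l))) * τ g⁻¹ := by
              rw [hfs, hj_mul]; group }, ?_, ?_⟩
    · ext e
      simp only [Subgroup.mem_inf, hLrange]
      constructor
      · rintro ⟨⟨l, g, rfl⟩, hr⟩
        have hg1 : g = 1 := by
          have : π (j (f l) * τ g) = 1 := by rw [hexact] at hr; exact hr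
          simpa [hπj, hτπ] using this
        subst hg1
        exact ⟨l + β 1 1, by rw [hτ1, ← hj_mul, ← map_add]⟩
      · rintro ⟨l, rfl⟩
        refine ⟨⟨l - β 1 1, 1, ?_⟩, Multiplicative.ofAdd (f l), rfl⟩
        rw [hτ1, ← hj_mul, ← map_add, sub_add_cancel]
    · ext e
      simp only [Set.mem_univ, iff_true]
      refine ⟨τ (π e), ⟨0, π e, by rw [map_zero, hj0, one_mul]⟩,
        (τ (π e))⁻¹ * e, ?_, by group⟩
      rw [SetLike.mem_coe, hexact]
      show π _ = 1
      simp [hτπ]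
end

section
/- Let G be a group, L ≤ M an inclusion of G-modules, and E a split extension M ⋊ G (class 0 in H²(G,M)). Then the set of cohomology classes in H²(G,L) defining subextensions S of E with S ∩ M = L and S·M = E equals the kernel of the induced map φ: H²(G,L) → H²(G,M). In particular, a nonsplit extension L.G embeds as such a subextension if and only if ker φ ≠ 0 contains the class of L.G. -/
open scoped Pointwise

/-- A `2`-coboundary of the group `G` with values in the `G`-module `M`. -/
def IsTwoCoboundary {G M : Type*} [Group G] [AddCommGroup M] [DistribMulAction G M]
    (γ : G → G → M) : Prop :=
  ∃ c : G → M, ∀ g h : G, γ g h = g • c h - c (g * h) + c g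

/-- The action of `G` on a `G`-module `M`, written multiplicatively. -/
def modAut (G M : Type*) [Group G] [AddCommGroup M] [DistribMulAction G M] :
    G →* MulAut (Multiplicative M) where
  toFun g :=
    { toFun := fun v => Multiplicative.ofAdd (g • Multiplicative.toAdd v)
      invFun := fun v => Multiplicative.ofAdd (g⁻¹ • Multiplicative.toAdd v)
      left_inv := fun v => by
        apply Multiplicative.toAdd.injective
        simp
      right_inv := fun v => by
        apply Multiplicative.toAdd.injective
        simp
      map_mul' := fun v w => by
        apply Multiplicative.toAdd.injective
        simp [smul_add] }
  map_one' := by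
    apply MulEquiv.ext
    intro v
    apply Multiplicative.toAdd.injective
    simp
  map_mul' := fun g h => by
    apply MulEquiv.ext
    intro v
    apply Multiplicative.toAdd.injective
    simp [mul_smul]

theorem modAut_toAdd {G M : Type*} [Group G] [AddCommGroup M] [DistribMulAction G M]
    (g : G) (v : Multiplicative M) :
    Multiplicative.toAdd (modAut G M g v) = g • Multiplicative.toAdd v := rfl

/-- Let `L ≤ M` be an inclusion of `G`-modules and
`E = M ⋊ G` the split extension (class `0 ∈ H²(G,M)`). A `2`-cocycle `β` with values
in `L` defines a subextension `S` of `E` (i.e. a subgroup with `S ∩ M = L` and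
`S · M = E`, together with a section `σ : G → S` realizing `β`) if and only if the
image of `β` in `H²(G,M)` vanishes, i.e. `β` (viewed in `M`) is a coboundary. -/
theorem stmt_5 {G M : Type*} [Group G] [AddCommGroup M] [DistribMulAction G M]
    (L : AddSubgroup M) (hL : ∀ (g : G), ∀ m ∈ L, g • m ∈ L)
    (β : G → G → L) (hβ : IsTwoCocycle (fun g h => (β g h : M))) :
    (∃ S : Subgroup (SemidirectProduct (Multiplicative M) G (modAut G M)),
        S ⊓ (SemidirectProduct.inl :
            Multiplicative M →* SemidirectProduct (Multiplicative M) G (modAut G M)).range =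
          Subgroup.map SemidirectProduct.inl (AddSubgroup.toSubgroup L) ∧
        (S : Set (SemidirectProduct (Multiplicative M) G (modAut G M))) *
            ((SemidirectProduct.inl :
              Multiplicative M →* SemidirectProduct (Multiplicative M) G (modAut G M)).range :
              Set (SemidirectProduct (Multiplicative M) G (modAut G M))) = Set.univ ∧
        ∃ σ : G → SemidirectProduct (Multiplicative M) G (modAut G M),
          (∀ g, σ g ∈ S) ∧ (∀ g, SemidirectProduct.rightHom (σ g) = g) ∧
          ∀ g h : G, σ g * σ h * (σ (g * h))⁻¹ =
            SemidirectProduct.inl (Multiplicative.ofAdd (β g h : M))) ↔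
      IsTwoCoboundary (fun g h => (β g h : M)) := by
  constructor
  · rintro ⟨S, hS1, hS2, σ, hσS, hσr, hσ⟩
    refine ⟨fun g => Multiplicative.toAdd (σ g).left, fun g h => ?_⟩
    have hr : ∀ g, (σ g).right = g := fun g => hσr g
    have key := congrArg (fun x => Multiplicative.toAdd x.left) (hσ g h)
    simp only [SemidirectProduct.mul_left, SemidirectProduct.inv_left,
      SemidirectProduct.mul_right, hr, SemidirectProduct.left_inl, modAut_toAdd,
      MonoidHom.coe_mk, OneHom.coe_mk, MulEquiv.coe_mk, Equiv.coe_fn_mk,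
      toAdd_mul, toAdd_ofAdd, toAdd_inv, smul_smul, mul_inv_cancel, one_smul] at key
    show (β g h : M) = g • Multiplicative.toAdd (σ h).left
      - Multiplicative.toAdd (σ (g * h)).left + Multiplicative.toAdd (σ g).left
    rw [← key]; abel
  · rintro ⟨c, hc⟩
    have hc1 : c 1 ∈ L := by
      have := hc 1 1
      simp at this
      rw [← this]; exact (β 1 1).2
    have hsum : ∀ g h : G, c g + g • c h - c (g * h) ∈ L := by
      intro g h
      have h1 : (β g h : M) = g • c h - c (g * h) + c g := hc g h
      have : c g + g • c h - c (g * h) = (β g h : M) := by rw [h1]; abel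
      rw [this]; exact (β g h).2
    refine ⟨{ carrier := {x | Multiplicative.toAdd x.left - c x.right ∈ L}
              one_mem' := by simpa using neg_mem hc1
              mul_mem' := by
                intro a b ha hb
                simp only [Set.mem_setOf_eq, SemidirectProduct.mul_left,
                  SemidirectProduct.mul_right, toAdd_mul, modAut_toAdd, MonoidHom.coe_mk,
                  OneHom.coe_mk, MulEquiv.coe_mk, Equiv.coe_fn_mk, toAdd_ofAdd] at *
                have : Multiplicative.toAdd a.left + a.right • Multiplicative.toAdd b.left
                    - c (a.right * b.right) =
                    (Multiplicative.toAdd a.left - c a.right) +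
                    a.right • (Multiplicative.toAdd b.left - c b.right) +
                    (c a.right + a.right • c b.right - c (a.right * b.right)) := by
                  rw [smul_sub]; abel
                rw [this]
                exact add_mem (add_mem ha (hL _ _ hb)) (hsum _ _)
              inv_mem' := by
                intro a ha
                simp only [Set.mem_setOf_eq, SemidirectProduct.inv_left,
                  SemidirectProduct.inv_right, modAut_toAdd, MonoidHom.coe_mk,
                  OneHom.coe_mk, MulEquiv.coe_mk, Equiv.coe_fn_mk, toAdd_ofAdd,
                  toAdd_inv] at *
                have : a.right⁻¹ • (-Multiplicative.toAdd a.left) - c a.right⁻¹ =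
                    -(a.right⁻¹ • (Multiplicative.toAdd a.left - c a.right))
                    - (c a.right⁻¹ + a.right⁻¹ • c a.right - c 1) - c 1 := by
                  rw [smul_sub]; simp; abel
                rw [this]
                refine sub_mem (sub_mem (neg_mem (hL _ _ ha)) ?_) hc1
                have := hsum a.right⁻¹ a.right
                simpa [add_comm] using this }, ?_, ?_, ?_⟩
    · ext x
      simp only [Subgroup.mem_inf, MonoidHom.mem_range, Subgroup.mem_map,
        Subgroup.mem_mk, Set.mem_setOf_eq]
      constructor
      · rintro ⟨hx, m, rfl⟩
        refine ⟨m, ?_, rfl⟩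
        have hx' : Multiplicative.toAdd m - c 1 ∈ L := by simpa using hx
        show Multiplicative.toAdd m ∈ L
        have he : Multiplicative.toAdd m = (Multiplicative.toAdd m - c 1) + c 1 := by abel
        rw [he]; exact add_mem hx' hc1
      · rintro ⟨m, hm, rfl⟩
        have hm' : Multiplicative.toAdd m ∈ L := hm
        exact ⟨by simpa using sub_mem hm' hc1, m, rfl⟩
    · ext x
      simp only [Set.mem_univ, iff_true]
      refine ⟨⟨Multiplicative.ofAdd (c x.right), x.right⟩, ?_,
        SemidirectProduct.inl (Multiplicative.ofAdd (x.right⁻¹ • (Multiplicative.toAdd x.left - c x.right))), ⟨_, rfl⟩, ?_⟩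
      · simpa using zero_mem L
      · ext <;> simp [SemidirectProduct.mul_left, SemidirectProduct.mul_right, modAut_toAdd]
    · refine ⟨fun g => ⟨Multiplicative.ofAdd (c g), g⟩, fun g => by simpa using zero_mem L, fun g => rfl, fun g h => ?_⟩
      have h1 : (β g h : M) = g • c h - c (g * h) + c g := hc g h
      have : (β g h : M) = c g + g • c h - c (g * h) := by rw [h1]; abel
      ext
      · apply Multiplicative.toAdd.injective
        simp only [SemidirectProduct.mul_left, SemidirectProduct.inv_left,
          SemidirectProduct.mul_right, SemidirectProduct.inv_right,
          SemidirectProduct.left_inl, modAut_toAdd, MonoidHom.coe_mk, OneHom.coe_mk,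
          MulEquiv.coe_mk, Equiv.coe_fn_mk, toAdd_mul, toAdd_ofAdd, toAdd_inv,
          smul_smul, mul_inv_cancel, one_smul]
        rw [this]; abel
      · show g * h * (g * h)⁻¹ = 1
        group
end

section
/- Let q be a prime power, n ≥ 2, r a prime dividing gcd(n, q-1) with r ∣ (q-1)/gcd(n,q-1), and let a ∈ F_q^× have order r·gcd(n,q-1). Then the diagonal matrix d = diag(a, a, ..., a, a^(1-n)) ∈ SL_n(q) has an image in PSL_n(q) of order divisible by r, and in fact the image of d in any quotient of SL_n(q) by a central subgroup of index r over the center's image — specifically, the image s of d in the quotient S = SL_n(q)/Z₀ where Z₀ is the subgroup of scalar matrices of index r in the full scalar subgroup — has order r², while the image g of s in PSL_n(q) has order r. -/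
open Matrix

/-- Let `r` be a prime with `r ∣ gcd(n,q-1)` and
`r ∣ (q-1)/gcd(n,q-1)`, let `a ∈ F_q^×` have order `r·gcd(n,q-1)`, and let
`d = diag(a, …, a, a^{1-n}) ∈ SL_n(q)`. Let `Z₀` be a subgroup of the center of
`SL_n(q)` (the scalar matrices) of index `r` in the center. Then the image `s` of `d`
in `S = SL_n(q)/Z₀` has order `r²`, while the image `g` of `s` in
`PSL_n(q) = SL_n(q)/Z` has order `r` (in particular, `r` divides the order of the
image of `d` in `PSL_n(q)`). -/
theorem stmt_13 (n : ℕ) (hn : 2 ≤ n) (F : Type) [Field F] [Fintype F]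
    (r : ℕ) (hr : r.Prime)
    (h1 : r ∣ Nat.gcd n (Fintype.card F - 1))
    (h2 : r ∣ (Fintype.card F - 1) / Nat.gcd n (Fintype.card F - 1))
    (a : Fˣ) (ha : orderOf a = r * Nat.gcd n (Fintype.card F - 1))
    (d : SpecialLinearGroup (Fin n) F)
    (hd : (d : Matrix (Fin n) (Fin n) F) =
      Matrix.diagonal (fun i : Fin n => if (i : ℕ) < n - 1 then (a : F) else ((a⁻¹ : Fˣ) : F) ^ (n - 1)))
    (Z₀ : Subgroup (SpecialLinearGroup (Fin n) F)) [Z₀.Normal]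
    (hZ₀ : Z₀ ≤ Subgroup.center (SpecialLinearGroup (Fin n) F))
    (hZ₀idx : Z₀.relIndex (Subgroup.center (SpecialLinearGroup (Fin n) F)) = r) :
    orderOf (QuotientGroup.mk d : SpecialLinearGroup (Fin n) F ⧸ Z₀) = r ^ 2 ∧
      orderOf (QuotientGroup.mk d : ProjectiveSpecialLinearGroup (Fin n) F) = r ∧
      r ∣ orderOf (QuotientGroup.mk d : ProjectiveSpecialLinearGroup (Fin n) F) := by
  classical
  haveI : Fact r.Prime := ⟨hr⟩
  set q1 := Fintype.card F - 1 with hq1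
  set k := Nat.gcd n q1 with hk
  have hn0 : 0 < n := by omega
  have hk_dvd_n : k ∣ n := Nat.gcd_dvd_left _ _
  have hk_pos : 0 < k := Nat.gcd_pos_of_pos_left _ hn0
  have hr2 : 2 ≤ r := hr.two_le
  have hrpos : 0 < r := by omega
  have hcard : Fintype.card Fˣ = q1 := by rw [Fintype.card_units, hq1]
  have hrk_dvd : r * k ∣ q1 := by rw [← hcard, ← ha]; exact orderOf_dvd_card
  have hrk_not_n : ¬ (r * k ∣ n) := by
    intro h
    have h' : r * k ∣ k := Nat.dvd_gcd h hrk_dvd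
    have := Nat.le_of_dvd hk_pos h'
    nlinarith
  have hpow_iff : ∀ m : ℕ, (a : Fˣ) ^ m = 1 ↔ r * k ∣ m := by
    intro m; rw [← orderOf_dvd_iff_pow_eq_one, ha]
  have hrn : (a : Fˣ) ^ ((n - 1) * r + r) = 1 := by
    have he : (n - 1) * r + r = n * r := by
      have h1 : n - 1 + 1 = n := by omega
      calc (n - 1) * r + r = ((n - 1) + 1) * r := by ring
        _ = n * r := by rw [h1]
    rw [he, (hpow_iff (n * r))]
    obtain ⟨t, ht⟩ := hk_dvd_n
    exact ⟨t, by rw [ht]; ring⟩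
  have haux : (a⁻¹ : Fˣ) ^ ((n - 1) * r) = a ^ r := by
    rw [inv_pow]
    refine inv_eq_of_mul_eq_one_left ?_
    rw [← pow_add, show r + (n - 1) * r = (n - 1) * r + r by ring]
    exact hrn
  -- the matrix of d ^ r is the scalar matrix of (a : F) ^ r
  have hdr : ((d ^ r : SpecialLinearGroup (Fin n) F) : Matrix (Fin n) (Fin n) F)
      = Matrix.scalar (Fin n) ((a : F) ^ r) := by
    rw [Matrix.SpecialLinearGroup.coe_pow, hd, Matrix.diagonal_pow, Matrix.scalar_apply,
      Matrix.diagonal_eq_diagonal_iff]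
    intro i
    rw [Pi.pow_apply]
    by_cases hi : (i : ℕ) < n - 1
    · rw [if_pos hi]
    · rw [if_neg hi, ← pow_mul, ← Units.val_pow_eq_pow_val, ← Units.val_pow_eq_pow_val]
      exact congrArg Units.val haux
  have hzsc : ∀ m : ℕ, (((d ^ r) ^ m : SpecialLinearGroup (Fin n) F) : Matrix (Fin n) (Fin n) F)
      = Matrix.scalar (Fin n) (((a : F) ^ r) ^ m) := by
    intro m
    rw [Matrix.SpecialLinearGroup.coe_pow, Matrix.SpecialLinearGroup.coe_pow, map_pow]
    congr 1
  have i0 : Fin n := ⟨0, hn0⟩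
  have hscalar_inj : ∀ c : F, Matrix.scalar (Fin n) c = 1 → c = 1 := by
    intro c hc
    have := congrFun (congrFun hc i0) i0
    simpa [Matrix.scalar_apply, Matrix.diagonal_apply_eq, Matrix.one_apply_eq] using this
  -- order characterization of d ^ r
  have hz_iff : ∀ m : ℕ, (d ^ r) ^ m = 1 ↔ k ∣ m := by
    intro m
    constructor
    · intro hm
      have hmat := congrArg (fun A : SpecialLinearGroup (Fin n) F =>
        (A : Matrix (Fin n) (Fin n) F)) hm
      simp only [hzsc m, Matrix.SpecialLinearGroup.coe_one] at hmat
      have hc : ((a : F) ^ r) ^ m = 1 := hscalar_inj _ hmat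
      have hu : (a : Fˣ) ^ (r * m) = 1 := by
        apply Units.ext
        push_cast
        rw [pow_mul]
        exact hc
      have := (hpow_iff (r * m)).mp hu
      exact (mul_dvd_mul_iff_left (by omega : r ≠ 0)).mp this
    · intro hm
      have hu : (a : Fˣ) ^ (r * m) = 1 := (hpow_iff (r * m)).mpr (mul_dvd_mul_left r hm)
      apply Subtype.ext
      rw [hzsc m, Matrix.SpecialLinearGroup.coe_one]
      have hc : ((a : F) ^ r) ^ m = 1 := by
        rw [← pow_mul, ← Units.val_pow_eq_pow_val, hu, Units.val_one]
      rw [hc]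
      exact _root_.map_one _
  -- d ^ r is central
  have hzc : d ^ r ∈ Subgroup.center (SpecialLinearGroup (Fin n) F) := by
    rw [Matrix.SpecialLinearGroup.mem_center_iff]
    refine ⟨(a : F) ^ r, ?_, hdr.symm⟩
    have hu : (a : Fˣ) ^ (r * n) = 1 := by
      rw [hpow_iff]
      obtain ⟨t, ht⟩ := hk_dvd_n
      exact ⟨t, by rw [ht]; ring⟩
    rw [Fintype.card_fin, ← pow_mul, ← Units.val_pow_eq_pow_val, hu, Units.val_one]
  -- d is not central
  have hdnc : d ∉ Subgroup.center (SpecialLinearGroup (Fin n) F) := by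
    intro h
    obtain ⟨c, hc1, hc2⟩ := Matrix.SpecialLinearGroup.mem_center_iff.mp h
    rw [hd, Matrix.scalar_apply, Matrix.diagonal_eq_diagonal_iff] at hc2
    have e0 := hc2 ⟨0, hn0⟩
    have e1 := hc2 ⟨n - 1, by omega⟩
    simp only [show ((⟨0, hn0⟩ : Fin n) : ℕ) = 0 from rfl] at e0
    rw [if_pos (by omega)] at e0
    rw [if_neg (by simp)] at e1
    have : (a : F) = ((a⁻¹ : Fˣ) : F) ^ (n - 1) := by rw [← e0, e1]
    have hu : (a : Fˣ) = (a⁻¹ : Fˣ) ^ (n - 1) := by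
      apply Units.ext; push_cast at this ⊢; exact this
    have han : (a : Fˣ) ^ n = 1 := by
      have : (a : Fˣ) * a ^ (n - 1) = 1 := by
        nth_rewrite 1 [hu]
        rw [inv_pow, inv_mul_cancel]
      calc (a : Fˣ) ^ n = a * a ^ (n - 1) := by
            rw [← pow_succ']
            congr 1
            omega
        _ = 1 := this
    exact hrk_not_n ((hpow_iff n).mp han)
  -- image of d in PSL has order r
  have hpsl : orderOf (QuotientGroup.mk d : ProjectiveSpecialLinearGroup (Fin n) F) = r := by
    apply orderOf_eq_prime
    · rw [← QuotientGroup.mk_pow]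
      exact (QuotientGroup.eq_one_iff _).mpr hzc
    · intro h
      exact hdnc ((QuotientGroup.eq_one_iff _).mp h)
  -- d ^ (r * r) ∈ Z₀
  have hZ₀r2 : d ^ (r * r) ∈ Z₀ := by
    set C := Subgroup.center (SpecialLinearGroup (Fin n) F)
    have hHidx : (Z₀.subgroupOf C).index = r := hZ₀idx
    have hmem : (⟨d ^ r, hzc⟩ : C) ^ r ∈ Z₀.subgroupOf C := by
      have h := Subgroup.pow_index_mem (Z₀.subgroupOf C) (⟨d ^ r, hzc⟩ : C)
      rw [hHidx] at h
      exact h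
    have : ((⟨d ^ r, hzc⟩ : C) ^ r : SpecialLinearGroup (Fin n) F) ∈ Z₀ := hmem
    simpa [← pow_mul, mul_comm] using this
  -- d ^ r ∉ Z₀
  have hZ₀r : d ^ r ∉ Z₀ := by
    intro hmem
    have hle : Subgroup.center (SpecialLinearGroup (Fin n) F) ≤ Z₀ := by
      intro w hw
      obtain ⟨c, hc1, hc2⟩ := Matrix.SpecialLinearGroup.mem_center_iff.mp hw
      have hcu : IsUnit c := IsUnit.of_pow_eq_one (by rw [Fintype.card_fin] at hc1; exact hc1) (by omega)
      obtain ⟨u, hu⟩ := hcu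
      have hun : u ^ n = 1 := by
        apply Units.ext
        push_cast
        rw [hu]
        rw [Fintype.card_fin] at hc1
        exact hc1
      have huq : u ^ q1 = 1 := by rw [← hcard]; exact pow_card_eq_one
      have huk : u ^ k = 1 := pow_gcd_eq_one.mpr ⟨hun, huq⟩
      have hck : c ^ k = 1 := by
        rw [← hu, ← Units.val_pow_eq_pow_val, huk, Units.val_one]
      -- (a : F) ^ r is a primitive k-th root of unity
      have hordar : orderOf ((a : Fˣ) ^ r) = k := by
        rw [orderOf_pow, ha]
        have hg : Nat.gcd (r * k) r = r := Nat.gcd_eq_right (dvd_mul_right r k)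
        rw [hg, Nat.mul_div_cancel_left _ hrpos]
      have hprimu : IsPrimitiveRoot ((a : Fˣ) ^ r) k := hordar ▸ IsPrimitiveRoot.orderOf _
      have hprim : IsPrimitiveRoot ((a : F) ^ r) k := by
        rw [← Units.val_pow_eq_pow_val]
        exact IsPrimitiveRoot.coe_units_iff.mpr hprimu
      haveI : NeZero k := ⟨hk_pos.ne'⟩
      obtain ⟨i, _, hi⟩ := hprim.eq_pow_of_pow_eq_one hck
      have hw_eq : w = (d ^ r) ^ i := by
        apply Subtype.ext
        rw [hzsc i, ← hc2, hi]
      rw [hw_eq]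
      exact Subgroup.pow_mem _ hmem i
    have : Z₀.relIndex (Subgroup.center (SpecialLinearGroup (Fin n) F)) = 1 :=
      Subgroup.relIndex_eq_one.mpr hle
    omega
  -- order of image of d in SL/Z₀ is r ^ 2
  have hS : orderOf (QuotientGroup.mk d : SpecialLinearGroup (Fin n) F ⧸ Z₀) = r ^ 2 := by
    have hs2 : (QuotientGroup.mk d : SpecialLinearGroup (Fin n) F ⧸ Z₀) ^ (r ^ 2) = 1 := by
      rw [← QuotientGroup.mk_pow]
      apply (QuotientGroup.eq_one_iff _).mpr
      rw [pow_two]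
      exact hZ₀r2
    have hsr : (QuotientGroup.mk d : SpecialLinearGroup (Fin n) F ⧸ Z₀) ^ r ≠ 1 := by
      intro h
      rw [← QuotientGroup.mk_pow] at h
      exact hZ₀r ((QuotientGroup.eq_one_iff _).mp h)
    have hdvd : orderOf (QuotientGroup.mk d : SpecialLinearGroup (Fin n) F ⧸ Z₀) ∣ r ^ 2 :=
      orderOf_dvd_of_pow_eq_one hs2
    obtain ⟨j, hj2, hjeq⟩ := (Nat.dvd_prime_pow hr).mp hdvd
    have hnotr : ¬ orderOf (QuotientGroup.mk d : SpecialLinearGroup (Fin n) F ⧸ Z₀) ∣ r := by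
      intro h
      exact hsr (orderOf_dvd_iff_pow_eq_one.mp h)
    have hj2' : j = 2 := by
      by_contra hne
      have hjle : j ≤ 1 := by omega
      apply hnotr
      rw [hjeq]
      calc r ^ j ∣ r ^ 1 := pow_dvd_pow r hjle
        _ = r := pow_one r
    rw [hjeq, hj2']
  exact ⟨hS, hpsl, hpsl ▸ dvd_refl r⟩
end

section
/- Let G be a finite simple group, V a G-module with unique trivial submodule I, and E = V ⋊ G. Then any subgroup of E isomorphic to a central extension Z_p.G (p prime) with nonsplit center must be a subextension of E with respect to the embedding I → V, i.e. S ∩ V = I and S·V = E. -/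
open scoped Pointwise

lemma subgroup_eq_of_le_of_card_le' {G : Type*} [Group G] {H K : Subgroup G} [Finite K]
    (h : H ≤ K) (hc : Nat.card K ≤ Nat.card H) : H = K := by
  refine SetLike.coe_injective (Set.eq_of_subset_of_ncard_le h ?_ (K : Set G).toFinite)
  rwa [← Nat.card_coe_set_eq, ← Nat.card_coe_set_eq]

lemma card_map_of_injective' {G N : Type*} [Group G] [Group N] (f : G →* N)
    (hf : Function.Injective f) (K : Subgroup G) : Nat.card (K.map f) = Nat.card K :=
  Nat.card_congr (K.equivMapOfInjective f hf).toEquiv.symm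

lemma conj_inl' {G : Type*} [Group G] {V : Type*} [AddCommGroup V] [DistribMulAction G V]
    (s : SemidirectProduct (Multiplicative V) G (modAut G V))
    (v : Multiplicative V) :
    s * SemidirectProduct.inl v * s⁻¹ = SemidirectProduct.inl (modAut G V s.right v) := by
  ext
  · show (s * SemidirectProduct.inl v * s⁻¹).left = _
    simp only [SemidirectProduct.mul_left, SemidirectProduct.inv_left,
      SemidirectProduct.inv_right, SemidirectProduct.left_inl, SemidirectProduct.right_inl,
      SemidirectProduct.mul_right, mul_one]
    apply Multiplicative.toAdd.injective
    simp [modAut, smul_smul, add_comm, add_assoc, add_left_comm]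
    rfl
  · simp

/-- Let `G` be a finite (nonabelian) simple group, `V` an
`𝔽_p[G]`-module whose unique trivial submodule is `I ≅ 𝔽_p`, and `E = V ⋊ G`. Then
any subgroup `S ≤ E` isomorphic to a nonsplit central extension `ℤ_p.G` must be a
subextension of `E` with respect to `I → V`, i.e. `S ∩ V = I` and `S·V = E`. -/
theorem stmt_16 {G : Type*} [Group G] [Finite G] [IsSimpleGroup G]
    (hGnab : ¬ ∀ a b : G, a * b = b * a)
    (p : ℕ) [Fact p.Prime]
    {V : Type*} [AddCommGroup V] [Module (ZMod p) V] [DistribMulAction G V]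
    [SMulCommClass G (ZMod p) V] [FiniteDimensional (ZMod p) V]
    (I : Submodule (ZMod p) V)
    (hI : ∀ v : V, (∀ g : G, g • v = v) ↔ v ∈ I)
    (hIdim : Module.finrank (ZMod p) I = 1)
    {W : Type*} [Group W] (πW : W →* G) (hπW : Function.Surjective πW)
    (hker : πW.ker ≤ Subgroup.center W) (hkerp : Nat.card πW.ker = p)
    (hnonsplit : ¬ ∃ σ : G →* W, πW.comp σ = MonoidHom.id G)
    (S : Subgroup (SemidirectProduct (Multiplicative V) G (modAut G V)))
    (hiso : Nonempty (W ≃* S)) :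
    S ⊓ (SemidirectProduct.inl :
        Multiplicative V →* SemidirectProduct (Multiplicative V) G (modAut G V)).range =
      Subgroup.map SemidirectProduct.inl (AddSubgroup.toSubgroup I.toAddSubgroup) ∧
    (S : Set (SemidirectProduct (Multiplicative V) G (modAut G V))) *
      ((SemidirectProduct.inl :
        Multiplicative V →* SemidirectProduct (Multiplicative V) G (modAut G V)).range :
        Set (SemidirectProduct (Multiplicative V) G (modAut G V))) = Set.univ := by
  classical
  obtain ⟨φ⟩ := hiso
  set E := SemidirectProduct (Multiplicative V) G (modAut G V) with hE
  have hp : p.Prime := Fact.out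
  haveI : Finite V := Module.finite_of_finite (ZMod p)
  haveI : Finite (Multiplicative V) := ‹Finite V›
  haveI : Finite E := by
    refine Finite.of_injective (fun e : E => (e.left, e.right)) ?_
    intro a b h
    ext
    · exact (Prod.mk.injEq _ _ _ _ ▸ h).1
    · exact (Prod.mk.injEq _ _ _ _ ▸ h).2
  haveI : Finite S := inferInstance
  haveI : Finite W := Finite.of_equiv S φ.symm.toEquiv
  -- the embedding W → E with range S
  set f : W →* E := S.subtype.comp φ.toMonoidHom with hfdef
  have hfinj : Function.Injective f := S.subtype_injective.comp φ.injective
  have hfrange : f.range = S := by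
    ext x
    constructor
    · rintro ⟨w, rfl⟩; exact (φ w).2
    · intro hx; exact ⟨φ.symm ⟨x, hx⟩, by simp [hfdef]⟩
  set ρ : W →* G := SemidirectProduct.rightHom.comp f with hρdef
  have hmemker : ∀ w : W, w ∈ ρ.ker ↔ f w ∈ (SemidirectProduct.inl :
      Multiplicative V →* E).range := by
    intro w
    rw [SemidirectProduct.range_inl_eq_ker_rightHom]
    rfl
  -- card W = p * card G
  have hcardW : Nat.card W = p * Nat.card G := by
    have h1 := Subgroup.card_eq_card_quotient_mul_card_subgroup πW.ker
    have h2 : Nat.card (W ⧸ πW.ker) = Nat.card G :=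
      Nat.card_congr (QuotientGroup.quotientKerEquivOfSurjective πW hπW).toEquiv
    rw [h1, h2, hkerp, mul_comm]
  -- ker ρ is abelian
  have habel : ∀ x ∈ ρ.ker, ∀ y ∈ ρ.ker, x * y = y * x := by
    intro x hx y hy
    obtain ⟨a, ha⟩ := (hmemker x).mp hx
    obtain ⟨b, hb⟩ := (hmemker y).mp hy
    apply hfinj
    rw [map_mul, map_mul, ← ha, ← hb, ← map_mul, ← map_mul, mul_comm]
  -- ker ρ ≤ ker πW
  have hkerle : ρ.ker ≤ πW.ker := by
    have hnormal : (ρ.ker.map πW).Normal := Subgroup.Normal.map inferInstance πW hπW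
    rcases IsSimpleGroup.eq_bot_or_eq_top_of_normal (ρ.ker.map πW) hnormal with hbot | htop
    · intro x hx
      have : πW x ∈ ρ.ker.map πW := ⟨x, hx, rfl⟩
      rw [hbot] at this
      exact this
    · exfalso
      apply hGnab
      intro a b
      have ha : a ∈ ρ.ker.map πW := htop ▸ Subgroup.mem_top a
      have hb : b ∈ ρ.ker.map πW := htop ▸ Subgroup.mem_top b
      obtain ⟨x, hx, rfl⟩ := ha
      obtain ⟨y, hy, rfl⟩ := hb
      rw [← map_mul, ← map_mul, habel x hx y hy]
  -- ker ρ = ker πW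
  have hkereq : ρ.ker = πW.ker := by
    have hdvd : Nat.card ρ.ker ∣ Nat.card πW.ker := Subgroup.card_dvd_of_le hkerle
    rw [hkerp] at hdvd
    rcases (Nat.Prime.eq_one_or_self_of_dvd hp _ hdvd) with h1 | hps
    · exfalso
      have hinj : Function.Injective ρ := by
        rw [← MonoidHom.ker_eq_bot_iff, ← Subgroup.card_eq_one]; exact h1
      have hle : Nat.card W ≤ Nat.card G := Nat.card_le_card_of_injective ρ hinj
      rw [hcardW] at hle
      have hGpos : 0 < Nat.card G := Nat.card_pos
      nlinarith [hp.two_le]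
    · apply subgroup_eq_of_le_of_card_le' hkerle
      rw [hkerp, hps]
  -- ρ is surjective
  have hρsurj : Function.Surjective ρ := by
    rw [← MonoidHom.range_eq_top]
    apply Subgroup.eq_top_of_card_eq
    have h1 : Nat.card W = Nat.card ρ.range * Nat.card ρ.ker := by
      have := Subgroup.card_eq_card_quotient_mul_card_subgroup ρ.ker
      rwa [Nat.card_congr (QuotientGroup.quotientKerEquivRange ρ).toEquiv] at this
    rw [hkereq, hkerp, hcardW, mul_comm (p : ℕ)] at h1
    have : Nat.card G = Nat.card ρ.range := by
      have := Nat.eq_of_mul_eq_mul_right (Nat.pos_of_ne_zero hp.ne_zero) h1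
      omega
    exact this.symm
  -- the subgroup I' of Multiplicative V
  set I' : Subgroup (Multiplicative V) := AddSubgroup.toSubgroup I.toAddSubgroup with hI'def
  have hmemI' : ∀ v : Multiplicative V, v ∈ I' ↔ Multiplicative.toAdd v ∈ I := by
    intro v; rfl
  have hcardI : Nat.card I' = p := by
    have e : I' ≃ I := by
      refine ⟨fun x => ⟨Multiplicative.toAdd x.1, (hmemI' _).mp x.2⟩,
        fun y => ⟨Multiplicative.ofAdd y.1, (hmemI' _).mpr y.2⟩, fun x => rfl, fun y => rfl⟩
    rw [Nat.card_congr e]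
    haveI : Fintype I := Fintype.ofFinite I
    rw [Nat.card_eq_fintype_card, Module.card_eq_pow_finrank (K := ZMod p) (V := I), hIdim,
      ZMod.card, pow_one]
  -- map f ρ.ker = S ⊓ inl.range
  have hmapf : Subgroup.map f ρ.ker =
      S ⊓ (SemidirectProduct.inl : Multiplicative V →* E).range := by
    have h : ρ.ker = Subgroup.comap f
        (SemidirectProduct.inl : Multiplicative V →* E).range := by
      rw [SemidirectProduct.range_inl_eq_ker_rightHom, MonoidHom.comap_ker]
    rw [h, Subgroup.map_comap_eq, hfrange]
  -- map f ρ.ker ≤ map inl I'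
  have hle2 : Subgroup.map f ρ.ker ≤ Subgroup.map SemidirectProduct.inl I' := by
    rintro x ⟨w, hw, rfl⟩
    obtain ⟨v, hv⟩ := (hmemker w).mp hw
    refine ⟨v, (hmemI' v).mpr ?_, hv⟩
    rw [← hI]
    intro g
    obtain ⟨w', hw'⟩ := hρsurj g
    have hwc : w ∈ Subgroup.center W := hker (hkereq ▸ hw)
    have hcent : f w' * f w * (f w')⁻¹ = f w := by
      rw [← map_mul, ← map_inv, ← map_mul, (Subgroup.mem_center_iff.mp hwc w').symm.symm]
      congr 1
      group
    rw [← hv, conj_inl'] at hcent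
    have h2 : modAut G V (f w').right v = v := SemidirectProduct.inl_injective hcent
    have h3 : (f w').right = g := hw'
    rw [h3] at h2
    exact Multiplicative.ofAdd.injective h2
  have hcardmapf : Nat.card (Subgroup.map f ρ.ker) = p := by
    rw [card_map_of_injective' f hfinj, hkereq, hkerp]
  have hcardmapI : Nat.card (Subgroup.map (SemidirectProduct.inl :
      Multiplicative V →* E) I') = p := by
    rw [card_map_of_injective' _ SemidirectProduct.inl_injective, hcardI]
  constructor
  · rw [← hmapf]
    exact subgroup_eq_of_le_of_card_le' hle2 (by rw [hcardmapf, hcardmapI])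
  · ext e
    simp only [Set.mem_univ, iff_true]
    obtain ⟨w, hw⟩ := hρsurj e.right
    refine ⟨f w, hfrange ▸ MonoidHom.mem_range.mpr ⟨w, rfl⟩, (f w)⁻¹ * e, ?_, by simp⟩
    rw [SetLike.mem_coe, SemidirectProduct.range_inl_eq_ker_rightHom, MonoidHom.mem_ker,
      map_mul, map_inv]
    show (SemidirectProduct.rightHom (f w))⁻¹ * SemidirectProduct.rightHom e = 1
    have : SemidirectProduct.rightHom (f w) = e.right := hw
    rw [this]
    simp [SemidirectProduct.rightHom_eq_right]
end
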